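/- Let V be a finite vertex set, A, B ⊆ V with A ∪ B = V and A ∩ B = {a}. Let D₁ and D₂ be loopless digraphs on V all of whose arcs join vertices of A, respectively vertices of B, and let h₁, h₂ : V → ℕ. Suppose the Latvian game on the restriction of D₁ to A with hatness h₁ is winnable, and the Latvian game on the restriction of D₂ to B with hatness h₂ is winnable. Then the Latvian game on the digraph whose arc set is the union of the arcs of D₁ and of D₂, with hatness h given by h v = h₁ v for v ∈ A \ {a}, h v = h₂ v for v ∈ B \ {a}, and h a = h₁ a · h₂ a, is winnable. -/

import Mathlib

/-- A Czech hat game on the digraph with adjacency `D` (sage `v` sees sage `u`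
iff `D v u`), guessness `g`, and hatness `h`, is winnable: there is a strategy
assigning to each sage `v` a set of `g v` guesses, depending only on the hats
she sees, such that for every coloring some sage guesses her own hat color. -/
def HatGame.Winnable {V : Type*} (D : V → V → Prop) (g h : V → ℕ) : Prop :=
  ∃ F : ∀ v : V, (∀ u : V, Fin (h u)) → Finset (Fin (h v)),
    (∀ (v : V) (c c' : ∀ u : V, Fin (h u)),
        (∀ u : V, D v u → c u = c' u) → F v c = F v c') ∧
    (∀ (v : V) (c : ∀ u : V, Fin (h u)), (F v c).card = g v) ∧
    (∀ c : ∀ u : V, Fin (h u), ∃ v : V, c v ∈ F v c)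

private lemma fin_cast_self {n : ℕ} (e : n = n) (x : Fin n) : Fin.cast e x = x := rfl

private def pick {α : Type*} [LinearOrder α] (s : Finset α) (hs : s.card = 1) : α :=
  s.min' (Finset.card_pos.mp (by omega))

private lemma eq_pick_of_mem {α : Type*} [LinearOrder α] {s : Finset α} (hs : s.card = 1)
    {x : α} (hx : x ∈ s) : x = pick s hs :=
  Finset.card_le_one.mp (le_of_eq hs) x hx _ (s.min'_mem _)

private lemma pick_congr {α : Type*} [LinearOrder α] {s t : Finset α} (e : s = t)
    (hs : s.card = 1) (ht : t.card = 1) : pick s hs = pick t ht := by subst e; rfl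

/-- Single-point product constructor (Theorem 3.1 of [KLR21b]): gluing two
winnable Latvian games at one vertex, multiplying hatnesses there, is winnable. -/
theorem latvian_single_point_product {V : Type*} [Fintype V]
    (A B : Set V) (a : V) (hAB : A ∪ B = Set.univ) (hab : A ∩ B = {a})
    (D₁ D₂ : V → V → Prop)
    (hloop₁ : ∀ v, ¬ D₁ v v) (hloop₂ : ∀ v, ¬ D₂ v v)
    (hD₁ : ∀ u v : V, D₁ u v → u ∈ A ∧ v ∈ A)
    (hD₂ : ∀ u v : V, D₂ u v → u ∈ B ∧ v ∈ B)
    (h₁ h₂ h : V → ℕ)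
    (hw₁ : HatGame.Winnable (fun x y : A => D₁ x y) (fun _ => 1) (fun x => h₁ x))
    (hw₂ : HatGame.Winnable (fun x y : B => D₂ x y) (fun _ => 1) (fun x => h₂ x))
    (hhA : ∀ v ∈ A, v ≠ a → h v = h₁ v)
    (hhB : ∀ v ∈ B, v ≠ a → h v = h₂ v)
    (hha : h a = h₁ a * h₂ a) :
    HatGame.Winnable (fun u v : V => D₁ u v ∨ D₂ u v) (fun _ => 1) h := by
  classical
  obtain ⟨F₁, hdep₁, hcard₁, hwin₁⟩ := hw₁
  obtain ⟨F₂, hdep₂, hcard₂, hwin₂⟩ := hw₂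
  have haA : a ∈ A := by
    have : a ∈ A ∩ B := by rw [hab]; rfl
    exact this.1
  have haB : a ∈ B := by
    have : a ∈ A ∩ B := by rw [hab]; rfl
    exact this.2
  have hVB : ∀ v : V, v ∉ A → v ∈ B := by
    intro v hv
    have : v ∈ A ∪ B := hAB ▸ Set.mem_univ v
    exact this.resolve_left hv
  let a₁ : A := ⟨a, haA⟩
  let a₂ : B := ⟨a, haB⟩
  let t₁ : ∀ u : A, Fin (h (u : V)) → Fin (h₁ (u : V)) := fun u x =>
    if hu : (u : V) = a then
      Fin.cast (congrArg h₁ hu).symm (finProdFinEquiv.symm (Fin.cast (hha ▸ congrArg h hu) x)).1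
    else Fin.cast (hhA u u.2 hu) x
  let t₂ : ∀ u : B, Fin (h (u : V)) → Fin (h₂ (u : V)) := fun u x =>
    if hu : (u : V) = a then
      Fin.cast (congrArg h₂ hu).symm (finProdFinEquiv.symm (Fin.cast (hha ▸ congrArg h hu) x)).2
    else Fin.cast (hhB u u.2 hu) x
  let c₁ : (∀ u : V, Fin (h u)) → ∀ u : A, Fin (h₁ (u : V)) := fun c u => t₁ u (c u)
  let c₂ : (∀ u : V, Fin (h u)) → ∀ u : B, Fin (h₂ (u : V)) := fun c u => t₂ u (c u)
  let G : ∀ v : V, (∀ u : V, Fin (h u)) → Fin (h v) := fun v c =>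
    if hv : v = a then
      Fin.cast (hha ▸ congrArg h hv).symm
        (finProdFinEquiv (pick (F₁ a₁ (c₁ c)) (hcard₁ a₁ (c₁ c)),
                          pick (F₂ a₂ (c₂ c)) (hcard₂ a₂ (c₂ c))))
    else if hvA : v ∈ A then
      Fin.cast (hhA v hvA hv).symm (pick (F₁ ⟨v, hvA⟩ (c₁ c)) (hcard₁ ⟨v, hvA⟩ (c₁ c)))
    else
      Fin.cast (hhB v (hVB v hvA) hv).symm
        (pick (F₂ ⟨v, hVB v hvA⟩ (c₂ c)) (hcard₂ ⟨v, hVB v hvA⟩ (c₂ c)))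
  have hc₁ : ∀ (v : V) (c c' : ∀ u : V, Fin (h u)),
      (∀ u : V, (D₁ v u ∨ D₂ v u) → c u = c' u) →
      ∀ hv : v ∈ A, F₁ ⟨v, hv⟩ (c₁ c) = F₁ ⟨v, hv⟩ (c₁ c') := by
    intro v c c' hcc' hv
    exact hdep₁ _ _ _ (fun u hu => by show t₁ u (c u) = t₁ u (c' u); rw [hcc' u (Or.inl hu)])
  have hc₂ : ∀ (v : V) (c c' : ∀ u : V, Fin (h u)),
      (∀ u : V, (D₁ v u ∨ D₂ v u) → c u = c' u) →
      ∀ hv : v ∈ B, F₂ ⟨v, hv⟩ (c₂ c) = F₂ ⟨v, hv⟩ (c₂ c') := by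
    intro v c c' hcc' hv
    exact hdep₂ _ _ _ (fun u hu => by show t₂ u (c u) = t₂ u (c' u); rw [hcc' u (Or.inr hu)])
  refine ⟨fun v c => {G v c}, ?_, ?_, ?_⟩
  · intro v c c' hcc'
    have e₁ := hc₁ v c c' hcc'
    have e₂ := hc₂ v c c' hcc'
    show ({G v c} : Finset (Fin (h v))) = {G v c'}
    have key : G v c = G v c' := by
      unfold G
      beta_reduce
      split_ifs with hv hvA
      · subst hv
        rw [pick_congr (e₁ haA) _ (hcard₁ _ _), pick_congr (e₂ haB) _ (hcard₂ _ _)]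
      · rw [pick_congr (e₁ hvA) _ (hcard₁ _ _)]
      · rw [pick_congr (e₂ (hVB v hvA)) _ (hcard₂ _ _)]
    rw [key]
  · intro v c; simp
  · intro c
    obtain ⟨v₁, hv₁⟩ := hwin₁ (c₁ c)
    by_cases hva : (v₁ : V) = a
    · obtain ⟨v₂, hv₂⟩ := hwin₂ (c₂ c)
      by_cases hvb : (v₂ : V) = a
      · -- both winners are a
        refine ⟨a, ?_⟩
        rw [Finset.mem_singleton]
        show c a = G a c
        unfold G
        beta_reduce
        rw [dif_pos rfl]
        have hv₁' : c₁ c a₁ ∈ F₁ a₁ (c₁ c) := by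
          rwa [show v₁ = a₁ from Subtype.ext hva] at hv₁
        have hv₂' : c₂ c a₂ ∈ F₂ a₂ (c₂ c) := by
          rwa [show v₂ = a₂ from Subtype.ext hvb] at hv₂
        have hp : (c₁ c a₁, c₂ c a₂) =
            (pick (F₁ a₁ (c₁ c)) (hcard₁ a₁ (c₁ c)), pick (F₂ a₂ (c₂ c)) (hcard₂ a₂ (c₂ c))) :=
          Prod.ext (eq_pick_of_mem (hcard₁ _ _) hv₁') (eq_pick_of_mem (hcard₂ _ _) hv₂')
        refine Eq.trans ?_ (congrArg (fun p => Fin.cast _ (finProdFinEquiv p)) hp)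
        show c a = Fin.cast _ (finProdFinEquiv (t₁ a₁ (c a), t₂ a₂ (c a)))
        unfold t₁ t₂
        beta_reduce
        rw [dif_pos rfl, dif_pos rfl]
        apply Fin.ext
        simp [Fin.coe_cast, finProdFinEquiv, Fin.coe_divNat, Fin.coe_modNat, Nat.mod_add_div]
        exact (Nat.mod_add_div (c a : ℕ) (h₂ a)).symm
      · refine ⟨v₂, ?_⟩
        rw [Finset.mem_singleton]
        show c (v₂ : V) = G (v₂ : V) c
        unfold G
        beta_reduce
        have hvA : (v₂ : V) ∉ A := by
          intro hmem
          exact hvb (by have : (v₂ : V) ∈ A ∩ B := ⟨hmem, v₂.2⟩; rwa [hab] at this)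
        rw [dif_neg hvb, dif_neg hvA]
        refine Eq.trans ?_ (congrArg (Fin.cast _) (eq_pick_of_mem (hcard₂ _ _) hv₂))
        show c (v₂ : V) = Fin.cast _ (t₂ v₂ (c (v₂ : V)))
        unfold t₂
        beta_reduce
        rw [dif_neg hvb]
        apply Fin.ext
        simp [Fin.coe_cast]
    · refine ⟨v₁, ?_⟩
      rw [Finset.mem_singleton]
      show c (v₁ : V) = G (v₁ : V) c
      unfold G
      beta_reduce
      rw [dif_neg hva, dif_pos v₁.2]
      refine Eq.trans ?_ (congrArg (Fin.cast _) (eq_pick_of_mem (hcard₁ _ _) hv₁))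
      show c (v₁ : V) = Fin.cast _ (t₁ v₁ (c (v₁ : V)))
      unfold t₁
      beta_reduce
      rw [dif_neg hva]
      apply Fin.ext
      simp [Fin.coe_cast]
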